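/- Let ι be a finite nonempty index set and equip ℝ^ι with the supremum norm ‖·‖_∞. Let f : ℝ^ι → ℝ be differentiable with Fréchet derivative Lipschitz continuous with constant L ≥ 0, let V ⊆ ι, E ∈ ℝ^ι, δ ≥ 0, and let g : ℝ^ι → ℝ satisfy |f(y) − g(y)| ≤ B for every y with ‖y − E‖_∞ ≤ δ, where B ≥ 0. Then the infimum, over all Δ ∈ ℝ^ι with Δ_i = 0 for i ∉ V and |Δ_i| ≤ δ for all i, of g(E + Δ) is at least f(E) − δ · Σ_{i∈V} |f′(E)(e_i)| − (L/2)·δ² − B. -/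

import Mathlib

/-- Full Composite Score Robustness Certificate schema (Theorem 2):
the sharp score `g` at any coalition-supported ℓ∞-bounded perturbation of `E`
is bounded below by the smooth score at `E` minus the gradient term, the
curvature penalty, and the softmax–argmax bias `B`. -/
theorem composite_score_robustness_certificate
    {ι : Type*} [Fintype ι] [Nonempty ι] [DecidableEq ι]
    (f : (ι → ℝ) → ℝ) (hf : Differentiable ℝ f)
    (L : ℝ) (hL : 0 ≤ L)
    (hLip : ∀ x y : ι → ℝ, ‖fderiv ℝ f x - fderiv ℝ f y‖ ≤ L * ‖x - y‖)
    (V : Finset ι) (E : ι → ℝ) (δ : ℝ) (hδ : 0 ≤ δ)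
    (g : (ι → ℝ) → ℝ) (B : ℝ) (hB : 0 ≤ B)
    (hbias : ∀ y : ι → ℝ, ‖y - E‖ ≤ δ → |f y - g y| ≤ B) :
    ∀ Δ : ι → ℝ, (∀ i ∉ V, Δ i = 0) → (∀ i, |Δ i| ≤ δ) →
      g (E + Δ) ≥
        f E - δ * (∑ i ∈ V, |fderiv ℝ f E (Pi.single i (1 : ℝ))|)
          - (L / 2) * δ ^ 2 - B := by
  intro Δ hsupp hbound
  have hΔ : ‖Δ‖ ≤ δ := by
    rw [pi_norm_le_iff_of_nonneg hδ]
    intro i; simpa [Real.norm_eq_abs] using hbound i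
  -- derivative of the path t ↦ f (E + t • Δ)
  have hφ : ∀ t : ℝ, HasDerivAt (fun t : ℝ => f (E + t • Δ))
      (fderiv ℝ f (E + t • Δ) Δ) t := by
    intro t
    have h1 : HasDerivAt (fun t : ℝ => E + t • Δ) Δ t := by
      simpa using ((hasDerivAt_id t).smul_const Δ).const_add E
    exact ((hf (E + t • Δ)).hasFDerivAt).comp_hasDerivAt t h1
  set D : ℝ := fderiv ℝ f E Δ with hD
  set ψ : ℝ → ℝ := fun t => f (E + t • Δ) - t * D + L / 2 * t ^ 2 * ‖Δ‖ ^ 2 with hψ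
  have hψ' : ∀ t : ℝ, HasDerivAt ψ
      (fderiv ℝ f (E + t • Δ) Δ - D + L * t * ‖Δ‖ ^ 2) t := by
    intro t
    have h2 : HasDerivAt (fun t : ℝ => t * D) D t := by
      simpa using (hasDerivAt_id t).mul_const D
    have h3 : HasDerivAt (fun t : ℝ => L / 2 * t ^ 2 * ‖Δ‖ ^ 2)
        (L * t * ‖Δ‖ ^ 2) t := by
      have := ((hasDerivAt_pow 2 t).const_mul (L / 2)).mul_const (‖Δ‖ ^ 2)
      refine this.congr_deriv ?_
      ring
    exact ((hφ t).sub h2).add h3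
  have hderiv_nonneg : ∀ t ∈ Set.Icc (0 : ℝ) 1,
      0 ≤ fderiv ℝ f (E + t • Δ) Δ - D + L * t * ‖Δ‖ ^ 2 := by
    intro t ht
    have hle : |fderiv ℝ f (E + t • Δ) Δ - D| ≤ L * t * ‖Δ‖ ^ 2 := by
      have h1 : |fderiv ℝ f (E + t • Δ) Δ - D| ≤
          ‖fderiv ℝ f (E + t • Δ) - fderiv ℝ f E‖ * ‖Δ‖ := by
        have := (fderiv ℝ f (E + t • Δ) - fderiv ℝ f E).le_opNorm Δ
        simpa [Real.norm_eq_abs, hD] using this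
      have h2 : ‖fderiv ℝ f (E + t • Δ) - fderiv ℝ f E‖ ≤ L * (t * ‖Δ‖) := by
        have h4 := hLip (E + t • Δ) E
        have h3 : ‖(E + t • Δ) - E‖ = t * ‖Δ‖ := by
          simp [norm_smul, Real.norm_eq_abs, abs_of_nonneg ht.1]
        rw [h3] at h4; exact h4
      calc |fderiv ℝ f (E + t • Δ) Δ - D| ≤
            ‖fderiv ℝ f (E + t • Δ) - fderiv ℝ f E‖ * ‖Δ‖ := h1
        _ ≤ L * (t * ‖Δ‖) * ‖Δ‖ := mul_le_mul_of_nonneg_right h2 (norm_nonneg _)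
        _ = L * t * ‖Δ‖ ^ 2 := by ring
    have := (abs_le.mp hle).1
    linarith
  have hmono : ψ 0 ≤ ψ 1 := by
    have hcont : ContinuousOn ψ (Set.Icc (0 : ℝ) 1) :=
      fun t _ => ((hψ' t).continuousAt).continuousWithinAt
    have hdiff : DifferentiableOn ℝ ψ (interior (Set.Icc (0 : ℝ) 1)) :=
      fun t _ => ((hψ' t).differentiableAt).differentiableWithinAt
    have hd : ∀ t ∈ interior (Set.Icc (0 : ℝ) 1), 0 ≤ deriv ψ t := by
      intro t ht
      rw [(hψ' t).deriv]
      exact hderiv_nonneg t (interior_subset ht)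
    exact monotoneOn_of_deriv_nonneg (convex_Icc 0 1) hcont hdiff hd
      (Set.left_mem_Icc.2 zero_le_one) (Set.right_mem_Icc.2 zero_le_one) zero_le_one
  have hψ0 : ψ 0 = f E := by simp [hψ]
  have hψ1 : ψ 1 = f (E + Δ) - D + L / 2 * ‖Δ‖ ^ 2 := by simp [hψ]
  have htaylor : f (E + Δ) ≥ f E + D - L / 2 * ‖Δ‖ ^ 2 := by
    rw [hψ0, hψ1] at hmono; linarith
  -- gradient term
  have hrepr : Δ = ∑ i ∈ V, Δ i • (Pi.single i (1 : ℝ) : ι → ℝ) := by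
    funext j
    rw [Finset.sum_apply]
    by_cases hj : j ∈ V
    · simp [Pi.single_apply, Finset.sum_ite_eq, hj]
    · simp [Pi.single_apply, Finset.sum_ite_eq, hj, hsupp j hj]
  have hDval : D = ∑ i ∈ V, Δ i * fderiv ℝ f E (Pi.single i (1 : ℝ)) := by
    rw [hD]
    conv_lhs => rw [hrepr]
    rw [map_sum]
    simp [smul_eq_mul]
  have hgrad : |D| ≤ δ * ∑ i ∈ V, |fderiv ℝ f E (Pi.single i (1 : ℝ))| := by
    rw [hDval, Finset.mul_sum]
    refine (Finset.abs_sum_le_sum_abs _ _).trans (Finset.sum_le_sum fun i _ => ?_)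
    rw [abs_mul]
    exact mul_le_mul_of_nonneg_right (hbound i) (abs_nonneg _)
  -- curvature term
  have hcurv : L / 2 * ‖Δ‖ ^ 2 ≤ L / 2 * δ ^ 2 := by
    apply mul_le_mul_of_nonneg_left _ (by linarith)
    exact pow_le_pow_left₀ (norm_nonneg _) hΔ 2
  -- bias
  have hbias' : g (E + Δ) ≥ f (E + Δ) - B := by
    have := hbias (E + Δ) (by simpa using hΔ)
    linarith [(abs_le.mp this).1, (abs_le.mp this).2]
  have habs := abs_le.mp hgrad
  linarith
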